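/- Define δ(u, v) = −u + v/φ. Let (u, v) be a Hofstadter G pair such that the Zeckendorf representation β = β_1…β_L of v has β_1 = 1 (i.e., v is in column 1 of the Fibonacci Zeckendorf array). Then −φ^{−1} < δ(u, v) < −φ^{−3}. -/

import Mathlib

noncomputable def goldenphi : ℝ := (1 + Real.sqrt 5) / 2

noncomputable def hofG (x : ℕ) : ℕ := (⌊((x : ℝ) + 1) / goldenphi⌋).toNat

noncomputable def hofDelta (u v : ℕ) : ℝ := -(u : ℝ) + (v : ℝ) / goldenphi

lemma sqrt5_gt : (2:ℝ) < Real.sqrt 5 := by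
  nlinarith [Real.sq_sqrt (show (0:ℝ) ≤ 5 by norm_num), Real.sqrt_nonneg 5]

lemma phi_gt : (1:ℝ) < goldenphi := by unfold goldenphi; nlinarith [sqrt5_gt]

lemma phi_pos : (0:ℝ) < goldenphi := lt_trans one_pos phi_gt

lemma phi_sq : goldenphi ^ 2 = goldenphi + 1 := by
  unfold goldenphi; nlinarith [Real.sq_sqrt (show (0:ℝ) ≤ 5 by norm_num)]

lemma c_pos : (0:ℝ) < goldenphi⁻¹ := inv_pos.mpr phi_pos

lemma c_lt_one : goldenphi⁻¹ < 1 := inv_lt_one_of_one_lt₀ phi_gt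

lemma c_id : goldenphi⁻¹ ^ 2 + goldenphi⁻¹ = 1 := by
  have h0 : goldenphi ≠ 0 := ne_of_gt phi_pos
  field_simp
  nlinarith [phi_sq]

lemma fib_phi (n : ℕ) : (Nat.fib (n+1) : ℝ) = goldenphi * Nat.fib n + (-goldenphi⁻¹)^n := by
  induction n with
  | zero => simp
  | succ n ih =>
    have h0 : goldenphi ≠ 0 := ne_of_gt phi_pos
    rw [Nat.fib_add_two]
    push_cast
    rw [ih, pow_succ]
    have hc : goldenphi⁻¹ = goldenphi - 1 := by
      field_simp
      nlinarith [phi_sq]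
    rw [hc]
    ring_nf
    nlinarith [phi_sq, sq_nonneg ((-(goldenphi-1))^n)]

lemma key (β : ℕ → ℕ) (L : ℕ) (hbit : ∀ i, β i = 0 ∨ β i = 1) :
    ∀ n a, L + 1 - a ≤ n →
      (Even a → -(goldenphi⁻¹)^(a+1) < (∑ i ∈ Finset.Icc a L, (β i : ℝ) * (-goldenphi⁻¹)^i * goldenphi⁻¹) ∧
        (∑ i ∈ Finset.Icc a L, (β i : ℝ) * (-goldenphi⁻¹)^i * goldenphi⁻¹) < (goldenphi⁻¹)^a) ∧
      (Odd a → -(goldenphi⁻¹)^a < (∑ i ∈ Finset.Icc a L, (β i : ℝ) * (-goldenphi⁻¹)^i * goldenphi⁻¹) ∧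
        (∑ i ∈ Finset.Icc a L, (β i : ℝ) * (-goldenphi⁻¹)^i * goldenphi⁻¹) < (goldenphi⁻¹)^(a+1)) := by
  set c := goldenphi⁻¹ with hcdef
  intro n
  induction n with
  | zero =>
    intro a ha
    rw [Finset.Icc_eq_empty (by omega), Finset.sum_empty]
    have h1 : (0:ℝ) < c ^ a := pow_pos c_pos a
    have h2 : (0:ℝ) < c ^ (a+1) := pow_pos c_pos (a+1)
    constructor <;> intro _ <;> constructor <;> linarith
  | succ n ih =>
    intro a ha
    by_cases hle : a ≤ L
    · have hsplit : (∑ i ∈ Finset.Icc a L, (β i : ℝ) * (-c)^i * c)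
          = (β a : ℝ) * (-c)^a * c + ∑ i ∈ Finset.Icc (a+1) L, (β i : ℝ) * (-c)^i * c := by
        rw [← Finset.Ioc_insert_left hle, Finset.sum_insert (by simp), Finset.Icc_add_one_left_eq_Ioc]
      have ihs := ih (a+1) (by omega)
      have hb : (β a : ℝ) = 0 ∨ (β a : ℝ) = 1 := by rcases hbit a with h | h <;> simp [h]
      have hca : (0:ℝ) < c ^ a := pow_pos c_pos a
      have hca1 : (0:ℝ) < c ^ (a+1) := pow_pos c_pos (a+1)
      have hca2 : (0:ℝ) < c ^ (a+2) := pow_pos c_pos (a+2)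
      have hm1 : c ^ a * c = c ^ (a+1) := (pow_succ c a).symm
      have hm2 : c ^ (a+1) * c = c ^ (a+2) := (pow_succ c (a+1)).symm
      have hrel : c ^ a = c ^ (a+1) + c ^ (a+2) := by
        have : c ^ a * 1 = c ^ a * (c + c^2) := by rw [← c_id]; ring
        calc c ^ a = c ^ a * (c + c^2) := by linarith
        _ = c ^ (a+1) + c ^ (a+2) := by ring
      rcases Nat.even_or_odd a with hpar | hpar
      · have hpow : (-c)^a = c^a := hpar.neg_pow c
        have ih2 := (ihs.2 (by simpa using hpar.add_one)).1
        have ih3 := (ihs.2 (by simpa using hpar.add_one)).2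
        constructor
        · intro _
          rw [hsplit, hpow]
          constructor
          · rcases hb with h | h <;> rw [h] <;> nlinarith
          · rcases hb with h | h <;> rw [h] <;> nlinarith
        · intro hodd; exact absurd hpar (Nat.not_even_iff_odd.symm.mp hodd)
      · have hpow : (-c)^a = -c^a := hpar.neg_pow c
        have heven : Even (a+1) := Odd.add_one hpar
        have ih2 := (ihs.1 heven).1
        have ih3 := (ihs.1 heven).2
        constructor
        · intro hev; exact absurd hev (Nat.not_even_iff_odd.symm.mp hpar)
        · intro _
          rw [hsplit, hpow]
          constructor
          · rcases hb with h | h <;> rw [h] <;> nlinarith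
          · rcases hb with h | h <;> rw [h] <;> nlinarith
    · rw [Finset.Icc_eq_empty (by omega), Finset.sum_empty]
      have h1 : (0:ℝ) < c ^ a := pow_pos c_pos a
      have h2 : (0:ℝ) < c ^ (a+1) := pow_pos c_pos (a+1)
      constructor <;> intro _ <;> constructor <;> linarith

theorem stmt_13 (u v L : ℕ) (β : ℕ → ℕ) (hL : 0 < L)
    (hbit : ∀ i, β i = 0 ∨ β i = 1) (hlast : β L = 1)
    (hnoconsec : ∀ i, 1 ≤ i → i < L → ¬(β i = 1 ∧ β (i + 1) = 1))
    (hv : v = ∑ i ∈ Finset.Icc 1 L, β i * Nat.fib (i + 1))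
    (hu : u = hofG v) (hβ1 : β 1 = 1) :
    -goldenphi⁻¹ < hofDelta u v ∧ hofDelta u v < -(goldenphi ^ 3)⁻¹ := by
  have hφ0 : goldenphi ≠ 0 := ne_of_gt phi_pos
  set c : ℝ := goldenphi⁻¹ with hcdef
  have hc1 : goldenphi * c = 1 := mul_inv_cancel₀ hφ0
  set N : ℕ := ∑ i ∈ Finset.Icc 1 L, β i * Nat.fib i with hN
  set S : ℕ → ℝ := fun a => ∑ i ∈ Finset.Icc a L, (β i : ℝ) * (-c)^i * c with hSdef
  have hvφ : (v:ℝ) / goldenphi = (N:ℝ) + S 1 := by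
    rw [hv, hN, hSdef]
    push_cast
    rw [div_eq_mul_inv, Finset.sum_mul, ← Finset.sum_add_distrib]
    apply Finset.sum_congr rfl
    intro i _
    linear_combination ((β i : ℝ) * c) * fib_phi i + ((β i : ℝ) * (Nat.fib i : ℝ)) * hc1
  have hS2 : -c^3 < S 2 ∧ S 2 < c^4 := by
    rcases Nat.lt_or_ge L 2 with h2 | h2
    · have : S 2 = 0 := by
        rw [hSdef]; simp only []
        rw [Finset.Icc_eq_empty (by omega), Finset.sum_empty]
      rw [this]
      constructor
      · have := pow_pos c_pos 3; linarith
      · exact pow_pos c_pos 4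
    · have hβ2 : β 2 = 0 := by
        have h := hnoconsec 1 le_rfl (by omega)
        rcases hbit 2 with h0 | h1
        · exact h0
        · exact absurd ⟨hβ1, h1⟩ h
      have hsplit : S 2 = (β 2 : ℝ) * (-c)^2 * c + S 3 := by
        rw [hSdef]; simp only []
        rw [← Finset.Ioc_insert_left h2, Finset.sum_insert (by simp), (show Finset.Icc 3 L = Finset.Ioc 2 L from Finset.Icc_add_one_left_eq_Ioc 2 L)]
      have h3 := (key β L hbit (L+1) 3 (by omega)).2 (by decide)
      have : S 2 = S 3 := by rw [hsplit, hβ2]; push_cast; ring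
      rw [this]
      exact ⟨h3.1, h3.2⟩
  have hS1eq : S 1 = -c^2 + S 2 := by
    have hsplit : S 1 = (β 1 : ℝ) * (-c)^1 * c + S 2 := by
      rw [hSdef]; simp only []
      rw [← Finset.Ioc_insert_left hL, Finset.sum_insert (by simp), (show Finset.Icc 2 L = Finset.Ioc 1 L from Finset.Icc_add_one_left_eq_Ioc 1 L)]
    rw [hsplit, hβ1]; push_cast; ring
  have hcid : c^2 + c = 1 := c_id
  have hc2 : c^2 = c * c := sq c
  have hc3 : c^3 = c * c * c := by ring
  have hc4 : c^4 = c * c * c * c := by ring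
  have hcp := c_pos
  have hS1lb : -c < S 1 := by
    rw [hS1eq]
    nlinarith [hS2.1]
  have hS1ub : S 1 < -c^3 := by
    rw [hS1eq]
    nlinarith [hS2.2]
  have hfloor : ⌊((v:ℝ) + 1) / goldenphi⌋ = (N:ℤ) := by
    have h1 : ((v:ℝ) + 1) / goldenphi = (N:ℝ) + (S 1 + c) := by
      rw [add_div, hvφ]; rw [hcdef]; ring
    rw [h1, Int.floor_eq_iff]
    constructor
    · push_cast
      nlinarith [pow_pos c_pos 3]
    · push_cast
      have : S 1 + c < 1 := by nlinarith [pow_pos c_pos 3, c_lt_one]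
      linarith
  have huN : u = N := by
    rw [hu]; unfold hofG; rw [hfloor]; simp
  have hdelta : hofDelta u v = S 1 := by
    unfold hofDelta
    rw [huN, hvφ]; ring
  have hinv3 : (goldenphi ^ 3)⁻¹ = c^3 := by rw [hcdef, inv_pow]
  rw [hdelta, hinv3]
  exact ⟨hS1lb, hS1ub⟩
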